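/- arXiv:1806.02089 — 3 statements merged into one kernel-verified Lean document; each statement's English description precedes it below -/
import Mathlib

section
/- Let γ > 0, a > 0 and ν ∈ ℂ satisfy Re ν = (1 + γ/(2a)) |ν|². Define ℘ = γν/(2a), p₊ = |1 − ℘|², p₋ = |℘|² and 𝔣 = γ|ν|²/a. Then p₊ + p₋ = 1 − 𝔣, 0 ≤ 𝔣 ≤ 1, and |ν| ≤ 1. -/
/-- If `γ > 0`, `a > 0` and `ν ∈ ℂ` satisfies `Re ν = (1 + γ/(2a)) |ν|²`, then with
`℘ = γν/(2a)`, `p₊ = |1 - ℘|²`, `p₋ = |℘|²` and `𝔣 = γ|ν|²/a` one has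
`p₊ + p₋ = 1 - 𝔣`, `0 ≤ 𝔣 ≤ 1` and `|ν| ≤ 1`. -/
theorem stmt3 (γ a : ℝ) (hγ : 0 < γ) (ha : 0 < a) (ν : ℂ)
    (h : ν.re = (1 + γ / (2 * a)) * ‖ν‖ ^ 2) :
    ‖1 - (γ : ℂ) * ν / (2 * a)‖ ^ 2 + ‖(γ : ℂ) * ν / (2 * a)‖ ^ 2
        = 1 - γ * ‖ν‖ ^ 2 / a ∧
    0 ≤ γ * ‖ν‖ ^ 2 / a ∧
    γ * ‖ν‖ ^ 2 / a ≤ 1 ∧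
    ‖ν‖ ≤ 1 := by
  set r := ‖ν‖ with hrdef
  have hrnn : 0 ≤ r := norm_nonneg ν
  have hre : ν.re ≤ r := Complex.re_le_norm ν
  have h' : (1 + γ / (2 * a)) * r ^ 2 ≤ r := h ▸ hre
  have h2a : (0:ℝ) < 2 * a := by linarith
  have hX : (2 * a + γ) * r ^ 2 ≤ 2 * a * r := by
    have := mul_le_mul_of_nonneg_left h' h2a.le
    have e : 2 * a * ((1 + γ / (2 * a)) * r ^ 2) = (2 * a + γ) * r ^ 2 := by
      field_simp
    linarith [e ▸ this]
  have h3 : (2 * a + γ) * r ≤ 2 * a := by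
    rcases eq_or_lt_of_le hrnn with h0 | h0
    · rw [← h0]; simp; linarith
    · nlinarith [hX]
  have hnu : r ≤ 1 := by nlinarith [h3, mul_nonneg hγ.le hrnn]
  have key : γ * r ^ 2 / a ≤ 1 := by
    have hsq := mul_le_mul h3 h3 (by positivity) h2a.le
    rw [div_le_one ha]
    nlinarith [hsq, mul_nonneg (sq_nonneg (2 * a - γ)) (sq_nonneg r)]
  refine ⟨?_, by positivity, key, hnu⟩
  have hr2 : r ^ 2 = ν.re ^ 2 + ν.im ^ 2 := by
    rw [hrdef, Complex.sq_norm, Complex.normSq_apply]; ring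
  have h1 : ‖1 - (γ : ℂ) * ν / (2 * a)‖ ^ 2
      = (1 - γ * ν.re / (2*a))^2 + (γ * ν.im / (2*a))^2 := by
    rw [Complex.sq_norm, Complex.normSq_apply]
    simp [Complex.div_re, Complex.div_im, Complex.normSq_apply]
    field_simp
  have h2 : ‖(γ : ℂ) * ν / (2 * a)‖ ^ 2
      = (γ * ν.re / (2*a))^2 + (γ * ν.im / (2*a))^2 := by
    rw [Complex.sq_norm, Complex.normSq_apply]
    simp [Complex.div_re, Complex.div_im, Complex.normSq_apply]
    field_simp
  rw [h1, h2]
  rw [hr2] at h ⊢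
  field_simp at h ⊢
  linear_combination (-2 * γ) * h
end

section
/- There exists a constant C > 0 such that for every ε ∈ (0, 1/2] and every A ∈ ℝ one has ∫₀¹ du/((ε + |u − A|) √u) ≤ C ε^{−1/2} log(1/ε). -/
open MeasureTheory Set intervalIntegral

lemma int_one_div_add' (a b c : ℝ) (hab : a ≤ b) (h : 0 < a + c) :
    ∫ u in a..b, 1 / (u + c) = Real.log ((b + c) / (a + c)) := by
  rw [show (fun u => 1 / (u + c)) = (fun u => (fun x => 1 / x) (u + c)) from rfl,
    intervalIntegral.integral_comp_add_right (fun x => 1 / x) c,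
    integral_one_div]
  intro hmem
  rw [Set.uIcc_of_le (by linarith)] at hmem
  have := hmem.1; linarith

lemma int_one_div_sub' (a b c : ℝ) (hab : a ≤ b) (h : b < c) :
    ∫ u in a..b, 1 / (c - u) = Real.log ((c - a) / (c - b)) := by
  rw [show (fun u => 1 / (c - u)) = (fun u => (fun x => 1 / x) (c - u)) from rfl,
    intervalIntegral.integral_comp_sub_left (fun x => 1 / x) c,
    integral_one_div]
  intro hmem
  rw [Set.uIcc_of_le (by linarith)] at hmem
  have := hmem.1; linarith

lemma G_bound (ε : ℝ) (hε0 : 0 < ε) (hε2 : ε ≤ 1 / 2) (A : ℝ) :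
    (∫ u in Set.Ioo (0 : ℝ) 1, 1 / (ε + |u - A|)) ≤ 2 * Real.log (2 / ε) := by
  have hcont : Continuous fun u : ℝ => 1 / (ε + |u - A|) := by
    apply Continuous.div continuous_const
      (continuous_const.add (continuous_id.sub continuous_const).abs)
    intro u
    have := abs_nonneg (u - A); exact (by linarith : (0:ℝ) < ε + |u - A|).ne'
  have hlog0 : 0 ≤ Real.log (2 / ε) := by
    apply Real.log_nonneg; rw [le_div_iff₀ hε0]; linarith
  rw [← MeasureTheory.integral_Ioc_eq_integral_Ioo,
    ← intervalIntegral.integral_of_le (by norm_num : (0:ℝ) ≤ 1)]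
  rcases le_or_gt A 0 with hA | hA
  · have hcg : ∀ u ∈ Set.uIcc (0:ℝ) 1, 1 / (ε + |u - A|) = 1 / (u + (ε - A)) := by
      intro u hu
      rw [Set.uIcc_of_le (by norm_num : (0:ℝ) ≤ 1)] at hu
      rw [abs_of_nonneg (by linarith [hu.1])]
      congr 1; ring
    rw [intervalIntegral.integral_congr hcg,
      int_one_div_add' 0 1 (ε - A) (by norm_num) (by linarith)]
    have hratio : (1 + (ε - A)) / (0 + (ε - A)) ≤ 2 / ε := by
      rw [div_le_div_iff₀ (by linarith) hε0]; nlinarith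
    have := Real.log_le_log (by apply div_pos <;> linarith) hratio
    linarith
  rcases le_or_gt 1 A with hA1 | hA1
  · have hcg : ∀ u ∈ Set.uIcc (0:ℝ) 1, 1 / (ε + |u - A|) = 1 / ((ε + A) - u) := by
      intro u hu
      rw [Set.uIcc_of_le (by norm_num : (0:ℝ) ≤ 1)] at hu
      rw [abs_of_nonpos (by linarith [hu.2])]
      congr 1; ring
    rw [intervalIntegral.integral_congr hcg,
      int_one_div_sub' 0 1 (ε + A) (by norm_num) (by linarith)]
    have hratio : ((ε + A) - 0) / ((ε + A) - 1) ≤ 2 / ε := by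
      rw [div_le_div_iff₀ (by linarith) hε0]
      nlinarith [mul_nonneg (by linarith : (0:ℝ) ≤ A - 1) (by linarith : (0:ℝ) ≤ 2 - ε)]
    have := Real.log_le_log (by apply div_pos <;> linarith) hratio
    linarith
  · -- 0 < A < 1
    rw [← intervalIntegral.integral_add_adjacent_intervals
      (hcont.intervalIntegrable 0 A) (hcont.intervalIntegrable A 1)]
    have hcg1 : ∀ u ∈ Set.uIcc (0:ℝ) A, 1 / (ε + |u - A|) = 1 / ((ε + A) - u) := by
      intro u hu
      rw [Set.uIcc_of_le hA.le] at hu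
      rw [abs_of_nonpos (by linarith [hu.2])]
      congr 1; ring
    have hcg2 : ∀ u ∈ Set.uIcc A 1, 1 / (ε + |u - A|) = 1 / (u + (ε - A)) := by
      intro u hu
      rw [Set.uIcc_of_le hA1.le] at hu
      rw [abs_of_nonneg (by linarith [hu.1])]
      congr 1; ring
    rw [intervalIntegral.integral_congr hcg1, intervalIntegral.integral_congr hcg2,
      int_one_div_sub' 0 A (ε + A) hA.le (by linarith),
      int_one_div_add' A 1 (ε - A) hA1.le (by linarith)]
    have h1 : ((ε + A) - 0) / ((ε + A) - A) ≤ 2 / ε := by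
      rw [div_le_div_iff₀ (by linarith) hε0]; nlinarith
    have h2 : (1 + (ε - A)) / (A + (ε - A)) ≤ 2 / ε := by
      rw [div_le_div_iff₀ (by linarith) hε0]; nlinarith
    have := Real.log_le_log (by apply div_pos <;> linarith) h1
    have := Real.log_le_log (by apply div_pos <;> linarith) h2
    linarith

/-- There is `C > 0` such that for every `ε ∈ (0, 1/2]` and every `A ∈ ℝ`,
`∫₀¹ du/((ε + |u - A|) √u) ≤ C ε^{-1/2} log(1/ε)`. -/
theorem stmt8 : ∃ C : ℝ, 0 < C ∧ ∀ ε : ℝ, ε ∈ Set.Ioc (0 : ℝ) (1 / 2) → ∀ A : ℝ,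
    (∫ u in Set.Ioo (0 : ℝ) 1, 1 / ((ε + |u - A|) * Real.sqrt u))
      ≤ C * ε ^ (-(1 : ℝ) / 2) * Real.log (1 / ε) := by
  refine ⟨10, by norm_num, ?_⟩
  rintro ε ⟨hε0, hε2⟩ A
  have hε1 : ε < 1 := by linarith
  set P : ℝ := ε ^ (-(1:ℝ)/2) with hP
  have hP0 : 0 < P := Real.rpow_pos_of_pos hε0 _
  have habs : ∀ u : ℝ, 0 < ε + |u - A| := fun u => by
    have := abs_nonneg (u - A); linarith
  -- the dominating function
  have hrpow_eq : ∀ u : ℝ, 0 < u → u ^ (-(1:ℝ)/2) = (Real.sqrt u)⁻¹ := by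
    intro u hu
    rw [show (-(1:ℝ)/2) = -(1/2) by norm_num, Real.rpow_neg hu.le, ← Real.sqrt_eq_rpow]
  have hg0int : IntegrableOn (fun u : ℝ => ε⁻¹ * u ^ (-(1:ℝ)/2)) (Set.Ioo 0 1) := by
    have : IntervalIntegrable (fun u : ℝ => u ^ (-(1:ℝ)/2)) volume 0 1 :=
      intervalIntegrable_rpow' (by norm_num)
    exact ((this.1).mono_set Set.Ioo_subset_Ioc_self).const_mul _
  -- integrability of f
  have hfmeas : ContinuousOn (fun u : ℝ => 1 / ((ε + |u - A|) * Real.sqrt u)) (Set.Ioo 0 1) := by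
    apply ContinuousOn.div continuousOn_const
    · exact ((continuous_const.add (continuous_id.sub continuous_const).abs).mul
        Real.continuous_sqrt).continuousOn
    · intro u hu
      have h1 := habs u
      have h2 : 0 < Real.sqrt u := Real.sqrt_pos.mpr hu.1
      exact (mul_pos h1 h2).ne'
  have hfbound : ∀ u ∈ Set.Ioo (0:ℝ) 1,
      1 / ((ε + |u - A|) * Real.sqrt u) ≤ ε⁻¹ * u ^ (-(1:ℝ)/2) := by
    intro u hu
    rw [hrpow_eq u hu.1, ← mul_inv, ← one_div]
    apply one_div_le_one_div_of_le
    · exact mul_pos hε0 (Real.sqrt_pos.mpr hu.1)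
    · exact mul_le_mul_of_nonneg_right (by linarith [abs_nonneg (u - A)]) (Real.sqrt_nonneg u)
  have hfint : IntegrableOn (fun u : ℝ => 1 / ((ε + |u - A|) * Real.sqrt u)) (Set.Ioo 0 1) := by
    apply Integrable.mono' hg0int (hfmeas.aestronglyMeasurable measurableSet_Ioo)
    rw [ae_restrict_iff' measurableSet_Ioo]
    filter_upwards with u hu
    rw [Real.norm_eq_abs, abs_of_nonneg (by
      have h1 := habs u
      have h2 : 0 ≤ Real.sqrt u := Real.sqrt_nonneg u
      positivity)]
    exact hfbound u hu
  -- split the domain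
  have hsplit : Set.Ioo (0:ℝ) 1 = Set.Ioo 0 ε ∪ Set.Ico ε 1 :=
    (Set.Ioo_union_Ico_eq_Ioo hε0 hε1.le).symm
  have hdisj : Disjoint (Set.Ioo (0:ℝ) ε) (Set.Ico ε 1) := by
    apply Set.disjoint_left.mpr
    rintro u ⟨_, h1⟩ ⟨h2, _⟩; linarith
  have hsub1 : Set.Ioo (0:ℝ) ε ⊆ Set.Ioo 0 1 := Set.Ioo_subset_Ioo le_rfl hε1.le
  have hsub2 : Set.Ico ε 1 ⊆ Set.Ioo 0 1 := fun u hu => ⟨lt_of_lt_of_le hε0 hu.1, hu.2⟩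
  rw [hsplit, MeasureTheory.setIntegral_union hdisj measurableSet_Ico
    (hfint.mono_set hsub1) (hfint.mono_set hsub2)]
  -- piece 1
  have hpiece1 : (∫ u in Set.Ioo (0:ℝ) ε, 1 / ((ε + |u - A|) * Real.sqrt u)) ≤ 2 * P := by
    have h1 : (∫ u in Set.Ioo (0:ℝ) ε, 1 / ((ε + |u - A|) * Real.sqrt u))
        ≤ ∫ u in Set.Ioo (0:ℝ) ε, ε⁻¹ * u ^ (-(1:ℝ)/2) := by
      apply MeasureTheory.setIntegral_mono_on (hfint.mono_set hsub1)
        (hg0int.mono_set hsub1) measurableSet_Ioo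
      intro u hu
      exact hfbound u (hsub1 hu)
    have h2 : (∫ u in Set.Ioo (0:ℝ) ε, ε⁻¹ * u ^ (-(1:ℝ)/2)) = 2 * P := by
      have e1 : ε⁻¹ * ε ^ ((1:ℝ)/2) = P := by
        rw [hP, ← Real.rpow_neg_one ε, ← Real.rpow_add hε0]
        norm_num
      rw [MeasureTheory.integral_const_mul, ← MeasureTheory.integral_Ioc_eq_integral_Ioo,
        ← intervalIntegral.integral_of_le hε0.le,
        integral_rpow (Or.inl (by norm_num : (-1:ℝ) < -1/2)),
        Real.zero_rpow (by norm_num : (-(1:ℝ)/2 + 1) ≠ 0),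
        show (-(1:ℝ)/2 + 1) = 1/2 by norm_num, sub_zero, ← e1]
      ring
    linarith
  -- piece 2
  have hpiece2 : (∫ u in Set.Ico ε 1, 1 / ((ε + |u - A|) * Real.sqrt u))
      ≤ P * (2 * Real.log (2 / ε)) := by
    have hGint : IntegrableOn (fun u : ℝ => P * (1 / (ε + |u - A|))) (Set.Ioo 0 1) := by
      have hcont : Continuous fun u : ℝ => P * (1 / (ε + |u - A|)) := by
        apply continuous_const.mul
        apply Continuous.div continuous_const
          (continuous_const.add (continuous_id.sub continuous_const).abs)
        intro u; exact (habs u).ne'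
      exact (hcont.integrableOn_Icc (a := 0) (b := 1)).mono_set Set.Ioo_subset_Icc_self
    have h1 : (∫ u in Set.Ico ε 1, 1 / ((ε + |u - A|) * Real.sqrt u))
        ≤ ∫ u in Set.Ico ε 1, P * (1 / (ε + |u - A|)) := by
      apply MeasureTheory.setIntegral_mono_on (hfint.mono_set hsub2)
        (hGint.mono_set hsub2) measurableSet_Ico
      intro u hu
      have hu0 : 0 < u := lt_of_lt_of_le hε0 hu.1
      have hsu : Real.sqrt ε ≤ Real.sqrt u := Real.sqrt_le_sqrt hu.1
      have hse : 0 < Real.sqrt ε := Real.sqrt_pos.mpr hε0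
      have hPe : P = (Real.sqrt ε)⁻¹ := by rw [hP, hrpow_eq ε hε0]
      rw [one_div, mul_inv, hPe, one_div, mul_comm]
      apply mul_le_mul_of_nonneg_right _ (inv_nonneg.mpr (habs u).le)
      exact inv_anti₀ hse hsu
    have h2 : (∫ u in Set.Ico ε 1, P * (1 / (ε + |u - A|)))
        ≤ ∫ u in Set.Ioo (0:ℝ) 1, P * (1 / (ε + |u - A|)) := by
      apply MeasureTheory.setIntegral_mono_set hGint
      · filter_upwards with u
        simp only [Pi.zero_apply]
        have := habs u; positivity
      · exact (Filter.Eventually.of_forall hsub2 : _)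
    have h3 : (∫ u in Set.Ioo (0:ℝ) 1, P * (1 / (ε + |u - A|)))
        ≤ P * (2 * Real.log (2 / ε)) := by
      rw [MeasureTheory.integral_const_mul]
      exact mul_le_mul_of_nonneg_left (G_bound ε hε0 hε2 A) hP0.le
    linarith
  -- combine
  have hL : Real.log 2 ≤ Real.log (1 / ε) := by
    apply Real.log_le_log (by norm_num)
    rw [le_div_iff₀ hε0]; linarith
  have hlog2 : (0.6931471803 : ℝ) < Real.log 2 := Real.log_two_gt_d9
  have hsplit2 : Real.log (2 / ε) = Real.log 2 + Real.log (1 / ε) := by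
    rw [Real.log_div (by norm_num) hε0.ne', Real.log_div (by norm_num) hε0.ne', Real.log_one]
    ring
  have hkey : 2 + 2 * Real.log (2 / ε) ≤ 10 * Real.log (1 / ε) := by
    rw [hsplit2]; nlinarith
  calc (∫ u in Set.Ioo (0:ℝ) ε, 1 / ((ε + |u - A|) * Real.sqrt u))
        + ∫ u in Set.Ico ε 1, 1 / ((ε + |u - A|) * Real.sqrt u)
      ≤ 2 * P + P * (2 * Real.log (2 / ε)) := by linarith
    _ = P * (2 + 2 * Real.log (2 / ε)) := by ring
    _ ≤ P * (10 * Real.log (1 / ε)) := mul_le_mul_of_nonneg_left hkey hP0.le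
    _ = 10 * ε ^ (-(1:ℝ)/2) * Real.log (1 / ε) := by rw [hP]; ring
end

section
/- For every M > 0 there exist δ₀ ∈ (0,1) and ε₀ ∈ (0,1) such that for all β ∈ (−δ₀, δ₀) and all ε ∈ (0, ε₀) one has |∫₀¹ dv/(√v · (iε + β + v))| > M. -/
open MeasureTheory Set

/-- The dominating weight `v ↦ 1/(√v · e)` is integrable on `(0,1)`. -/
private lemma stmt10_weight_integrable (e : ℝ) (he : 0 < e) :
    IntegrableOn (fun v : ℝ => 1 / (Real.sqrt v * e)) (Ioo (0 : ℝ) 1) := by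
  have h1 : IntegrableOn (fun v : ℝ => v ^ (-(1/2) : ℝ)) (Ioo (0 : ℝ) 1) := by
    have h := intervalIntegral.intervalIntegrable_rpow' (a := 0) (b := 1)
      (r := -(1/2)) (by norm_num)
    rw [intervalIntegrable_iff] at h
    rw [uIoc_of_le (by norm_num : (0:ℝ) ≤ 1)] at h
    exact h.mono_set Ioo_subset_Ioc_self
  have h2 : IntegrableOn (fun v : ℝ => e⁻¹ * v ^ (-(1/2) : ℝ)) (Ioo (0:ℝ) 1) :=
    h1.const_mul e⁻¹
  refine h2.congr_fun (fun v hv => ?_) measurableSet_Ioo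
  have hv0 : (0:ℝ) < v := hv.1
  show e⁻¹ * v ^ (-(1/2) : ℝ) = 1 / (Real.sqrt v * e)
  rw [Real.rpow_neg hv0.le, ← Real.sqrt_eq_rpow]
  rw [one_div, mul_inv]
  ring

/-- Domination lemma: a function bounded by the weight on `(0,1)` is integrable there. -/
private lemma stmt10_integrable_of_bound {E : Type*} [NormedAddCommGroup E]
    {F : ℝ → E} {e : ℝ} (he : 0 < e)
    (hm : AEStronglyMeasurable F (volume.restrict (Ioo (0 : ℝ) 1)))
    (hbd : ∀ v ∈ Ioo (0 : ℝ) 1, ‖F v‖ ≤ 1 / (Real.sqrt v * e)) :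
    IntegrableOn F (Ioo (0 : ℝ) 1) :=
  Integrable.mono' (stmt10_weight_integrable e he) hm
    ((ae_restrict_mem measurableSet_Ioo).mono hbd)

/-- Real and imaginary parts of the integrand. -/
private lemma stmt10_reim (β e v : ℝ) (hv : 0 < v) (he : 0 < e) :
    (1 / ((Real.sqrt v : ℂ) * (Complex.I * e + β + v))).re
        = (β + v) / (Real.sqrt v * ((β + v) ^ 2 + e ^ 2)) ∧
      (1 / ((Real.sqrt v : ℂ) * (Complex.I * e + β + v))).im
        = -(e / (Real.sqrt v * ((β + v) ^ 2 + e ^ 2))) := by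
  set a := Real.sqrt v with ha
  have ha0 : 0 < a := Real.sqrt_pos.2 hv
  have hz : ((a : ℂ) * (Complex.I * e + β + v)) = ⟨a * (β + v), a * e⟩ := by
    apply Complex.ext <;> simp [Complex.add_re, Complex.add_im, Complex.mul_re,
      Complex.mul_im] <;> ring
  have hD : 0 < (β + v) ^ 2 + e ^ 2 := by positivity
  have hD1 : 0 < a * (β + v) * (a * (β + v)) + a * e * (a * e) := by
    have h1 : 0 ≤ a * (β + v) * (a * (β + v)) := mul_self_nonneg _
    have h2 : 0 < a * e * (a * e) := by positivity
    linarith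
  have hD2 : 0 < a * ((β + v) ^ 2 + e ^ 2) := by positivity
  rw [one_div, hz, Complex.inv_re, Complex.inv_im, Complex.normSq_mk]
  constructor
  · show a * (β + v) / (a * (β + v) * (a * (β + v)) + a * e * (a * e)) = _
    rw [div_eq_div_iff hD1.ne' hD2.ne']
    ring
  · show -(a * e) / (a * (β + v) * (a * (β + v)) + a * e * (a * e)) = _
    rw [neg_div, neg_inj, div_eq_div_iff hD1.ne' hD2.ne']
    ring

/-- Lower bound of a set integral by a constant on a subinterval. -/
private lemma stmt10_int_lower {φ : ℝ → ℝ} {a b k : ℝ} (hab : a < b)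
    (hs : Ioo a b ⊆ Ioo (0 : ℝ) 1)
    (hint : IntegrableOn φ (Ioo (0 : ℝ) 1))
    (hpos : ∀ v ∈ Ioo (0 : ℝ) 1, 0 ≤ φ v)
    (hk : ∀ v ∈ Ioo a b, k ≤ φ v) :
    k * (b - a) ≤ ∫ v in Ioo (0 : ℝ) 1, φ v := by
  have h1 : k * (b - a) ≤ ∫ v in Ioo a b, φ v := by
    have := setIntegral_ge_of_const_le (μ := volume) (s := Ioo a b) (f := φ)
      measurableSet_Ioo (by simp) hk (hint.mono_set hs)
    simp [Real.volume_Ioo, ENNReal.toReal_ofReal (by linarith : (0:ℝ) ≤ b - a)] at this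
    rw [max_eq_left (by linarith : (0:ℝ) ≤ b - a)] at this
    linarith
  refine h1.trans ?_
  exact setIntegral_mono_set hint
    ((ae_restrict_mem measurableSet_Ioo).mono hpos)
    (HasSubset.Subset.eventuallyLE hs)

set_option maxHeartbeats 1000000 in
/-- For every `M > 0` there exist `δ₀ ∈ (0,1)` and `ε₀ ∈ (0,1)` such that for all
`β ∈ (-δ₀, δ₀)` and all `ε ∈ (0, ε₀)`,
`|∫₀¹ dv/(√v (iε + β + v))| > M`. -/
theorem stmt10 : ∀ M : ℝ, 0 < M →
    ∃ δ₀ ∈ Set.Ioo (0 : ℝ) 1, ∃ ε₀ ∈ Set.Ioo (0 : ℝ) 1,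
      ∀ β : ℝ, β ∈ Set.Ioo (-δ₀) δ₀ → ∀ ε : ℝ, ε ∈ Set.Ioo 0 ε₀ →
        M < ‖(∫ v in Set.Ioo (0 : ℝ) 1,
          1 / ((Real.sqrt v : ℂ) * (Complex.I * ε + β + v)))‖ := by
  intro M hM
  have hM1 : (0 : ℝ) < M + 1 := by linarith
  set c : ℝ := (100 * (M + 1) ^ 2)⁻¹ with hc
  have hc0 : 0 < c := by positivity
  have hc12 : c < 1 / 2 := by
    rw [hc]
    rw [inv_lt_comm₀ (by positivity) (by norm_num)]
    nlinarith
  have hsqc : Real.sqrt c = (10 * (M + 1))⁻¹ := by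
    rw [show c = ((10 * (M + 1))⁻¹) ^ 2 by rw [hc]; field_simp; ring]
    exact Real.sqrt_sq (by positivity)
  have h4c : Real.sqrt (4 * c) = (5 * (M + 1))⁻¹ := by
    rw [show (4:ℝ) * c = ((5 * (M + 1))⁻¹) ^ 2 by rw [hc]; field_simp; ring]
    exact Real.sqrt_sq (by positivity)
  refine ⟨c, ⟨hc0, by linarith⟩, c, ⟨hc0, by linarith⟩, ?_⟩
  intro β hβ ε hε
  have hε0 : 0 < ε := hε.1
  have hεc : ε < c := hε.2
  have hβ1 : -c < β := hβ.1
  have hβ2 : β < c := hβ.2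
  -- the three functions
  set f : ℝ → ℂ := fun v => 1 / ((Real.sqrt v : ℂ) * (Complex.I * ε + β + v)) with hfdef
  set g : ℝ → ℝ := fun v => ε / (Real.sqrt v * ((β + v) ^ 2 + ε ^ 2)) with hgdef
  set h : ℝ → ℝ := fun v => (β + v) / (Real.sqrt v * ((β + v) ^ 2 + ε ^ 2)) with hhdef
  -- integrability of f
  have hfint : IntegrableOn f (Ioo (0 : ℝ) 1) := by
    refine stmt10_integrable_of_bound hε0 ?_ ?_
    · apply Measurable.aestronglyMeasurable
      fun_prop
    · intro v hv
      have hv0 : 0 < v := hv.1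
      have hsv : 0 < Real.sqrt v := Real.sqrt_pos.2 hv0
      have habs : Real.sqrt v * ε ≤ ‖(Real.sqrt v : ℂ) * (Complex.I * ε + β + v)‖ := by
        rw [norm_mul]
        have h1 : ‖(Real.sqrt v : ℂ)‖ = Real.sqrt v := by
          rw [Complex.norm_real, Real.norm_eq_abs, abs_of_nonneg hsv.le]
        have h2 : ε ≤ ‖Complex.I * ε + β + v‖ := by
          have h3 := Complex.abs_im_le_norm (Complex.I * (ε : ℂ) + β + v)
          have h4 : (Complex.I * (ε : ℂ) + β + v).im = ε := by simp
          rw [h4, abs_of_nonneg hε0.le] at h3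
          exact h3
        rw [h1]
        exact mul_le_mul_of_nonneg_left h2 hsv.le
      have : ‖f v‖ = (‖(Real.sqrt v : ℂ) * (Complex.I * ε + β + v)‖)⁻¹ := by
        simp [hfdef, map_div₀]
      rw [this, one_div]
      exact inv_anti₀ (by positivity) habs
  -- integrability of g
  have hgint : IntegrableOn g (Ioo (0 : ℝ) 1) := by
    refine stmt10_integrable_of_bound hε0 ?_ ?_
    · apply Measurable.aestronglyMeasurable
      fun_prop
    · intro v hv
      have hv0 : 0 < v := hv.1
      have hsv : 0 < Real.sqrt v := Real.sqrt_pos.2 hv0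
      have hg0 : 0 ≤ g v := by
        rw [hgdef]
        positivity
      rw [Real.norm_eq_abs, abs_of_nonneg hg0, hgdef]
      simp only
      rw [div_le_div_iff₀ (by positivity) (by positivity)]
      nlinarith [sq_nonneg (β + v), sq_nonneg ε]
  -- integrability of h
  have hhint : IntegrableOn h (Ioo (0 : ℝ) 1) := by
    refine stmt10_integrable_of_bound hε0 ?_ ?_
    · apply Measurable.aestronglyMeasurable
      fun_prop
    · intro v hv
      have hv0 : 0 < v := hv.1
      have hsv : 0 < Real.sqrt v := Real.sqrt_pos.2 hv0
      rw [Real.norm_eq_abs, hhdef]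
      simp only
      rw [abs_div, abs_of_pos (by positivity : (0:ℝ) < Real.sqrt v * ((β + v) ^ 2 + ε ^ 2))]
      rw [div_le_div_iff₀ (by positivity) (by positivity)]
      nlinarith [sq_nonneg (|β + v| - ε), abs_nonneg (β + v), sq_abs (β + v)]
  -- imaginary and real parts of the integral
  have him : (∫ v in Ioo (0 : ℝ) 1, f v).im = -∫ v in Ioo (0 : ℝ) 1, g v := by
    have h1 := integral_im (μ := volume.restrict (Ioo (0 : ℝ) 1)) hfint
    simp only [RCLike.im_to_complex] at h1
    rw [← h1, ← integral_neg]
    refine setIntegral_congr_fun measurableSet_Ioo (fun v hv => ?_)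
    exact (stmt10_reim β ε v hv.1 hε0).2
  have hre : (∫ v in Ioo (0 : ℝ) 1, f v).re = ∫ v in Ioo (0 : ℝ) 1, h v := by
    have h1 := integral_re (μ := volume.restrict (Ioo (0 : ℝ) 1)) hfint
    simp only [RCLike.re_to_complex] at h1
    rw [← h1]
    refine setIntegral_congr_fun measurableSet_Ioo (fun v hv => ?_)
    exact (stmt10_reim β ε v hv.1 hε0).1
  -- it suffices to bound via the imaginary or real part
  have key_im : M < ∫ v in Ioo (0 : ℝ) 1, g v →
      M < ‖∫ v in Ioo (0 : ℝ) 1, f v‖ := by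
    intro hgt
    calc M < ∫ v in Ioo (0 : ℝ) 1, g v := hgt
      _ ≤ |(∫ v in Ioo (0 : ℝ) 1, f v).im| := by
          rw [him, abs_neg]; exact le_abs_self _
      _ ≤ ‖∫ v in Ioo (0 : ℝ) 1, f v‖ := Complex.abs_im_le_norm _
  have key_re : M < ∫ v in Ioo (0 : ℝ) 1, h v →
      M < ‖∫ v in Ioo (0 : ℝ) 1, f v‖ := by
    intro hgt
    calc M < ∫ v in Ioo (0 : ℝ) 1, h v := hgt
      _ ≤ |(∫ v in Ioo (0 : ℝ) 1, f v).re| := by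
          rw [hre]; exact le_abs_self _
      _ ≤ ‖∫ v in Ioo (0 : ℝ) 1, f v‖ := Complex.abs_re_le_norm _
  have hgpos : ∀ v ∈ Ioo (0 : ℝ) 1, 0 ≤ g v := by
    intro v hv
    rw [hgdef]
    positivity
  -- case split
  rcases le_or_gt β (-ε) with hA | hA'
  · -- case A : β ≤ -ε, use the interval (-β, -β + ε)
    apply key_im
    have hsub : Ioo (-β) (-β + ε) ⊆ Ioo (0 : ℝ) 1 := by
      intro v hv
      constructor
      · linarith [hv.1]
      · have : -β + ε < 2 * c := by linarith
        have := hv.2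
        linarith
    have hlow := stmt10_int_lower (φ := g) (a := -β) (b := -β + ε)
      (k := 1 / (Real.sqrt (2 * c) * (2 * ε))) (by linarith) hsub hgint hgpos ?_
    · have hs2c : 0 < Real.sqrt (2 * c) := Real.sqrt_pos.2 (by linarith)
      have heq : 1 / (Real.sqrt (2 * c) * (2 * ε)) * (-β + ε - -β)
          = 1 / (2 * Real.sqrt (2 * c)) := by
        field_simp
        ring
      rw [heq] at hlow
      refine lt_of_lt_of_le ?_ hlow
      -- M < 1/(2 √(2c))
      have hstrict : Real.sqrt (2 * c) < (5 * (M + 1))⁻¹ := by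
        have h1 : Real.sqrt (2 * c) < Real.sqrt (4 * c) :=
          Real.sqrt_lt_sqrt (by linarith) (by linarith)
        linarith [h4c]
      rw [lt_div_iff₀ (by positivity)]
      have h5 : Real.sqrt (2 * c) * (5 * (M + 1)) < 1 := by
        have := mul_lt_mul_of_pos_right hstrict (by positivity : (0:ℝ) < 5 * (M + 1))
        rwa [inv_mul_cancel₀ (by positivity)] at this
      nlinarith [Real.sqrt_nonneg (2 * c)]
    · intro v hv
      have hv1 : -β < v := hv.1
      have hv2 : v < -β + ε := hv.2
      have hvpos : 0 < v := by linarith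
      have hsv : 0 < Real.sqrt v := Real.sqrt_pos.2 hvpos
      have hsvle : Real.sqrt v ≤ Real.sqrt (2 * c) :=
        Real.sqrt_le_sqrt (by linarith)
      have hbv1 : 0 < β + v := by linarith
      have hbv2 : β + v < ε := by linarith
      have hsq : (β + v) ^ 2 ≤ ε ^ 2 := by nlinarith
      rw [hgdef]
      simp only
      rw [div_le_div_iff₀ (by positivity) (by positivity)]
      have hden : Real.sqrt v * ((β + v) ^ 2 + ε ^ 2)
          ≤ Real.sqrt (2 * c) * (2 * ε ^ 2) := by
        have h1 : (β + v) ^ 2 + ε ^ 2 ≤ 2 * ε ^ 2 := by linarith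
        exact mul_le_mul hsvle h1 (by positivity) (Real.sqrt_nonneg _)
      nlinarith
  rcases le_or_gt ε β with hC | hB
  · -- case C : ε ≤ β, use real part on the interval (β, 2β)
    apply key_re
    have hβ0 : 0 < β := lt_of_lt_of_le hε0 hC
    have hsub : Ioo β (2 * β) ⊆ Ioo (0 : ℝ) 1 := by
      intro v hv
      exact ⟨lt_trans hβ0 hv.1, by linarith [hv.2]⟩
    have hhpos : ∀ v ∈ Ioo (0 : ℝ) 1, 0 ≤ h v := by
      intro v hv
      have hv0 : 0 < v := hv.1
      rw [hhdef]
      have : 0 < β + v := by linarith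
      positivity
    have hlow := stmt10_int_lower (φ := h) (a := β) (b := 2 * β)
      (k := 1 / (5 * β * Real.sqrt (2 * β))) (by linarith) hsub hhint hhpos ?_
    · have hs2b : 0 < Real.sqrt (2 * β) := Real.sqrt_pos.2 (by linarith)
      have heq : 1 / (5 * β * Real.sqrt (2 * β)) * (2 * β - β)
          = 1 / (5 * Real.sqrt (2 * β)) := by
        field_simp
        ring
      rw [heq] at hlow
      refine lt_of_lt_of_le ?_ hlow
      have hstrict : Real.sqrt (2 * β) < (5 * (M + 1))⁻¹ := by
        have h1 : Real.sqrt (2 * β) < Real.sqrt (4 * c) :=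
          Real.sqrt_lt_sqrt (by linarith) (by linarith)
        linarith [h4c]
      rw [lt_div_iff₀ (by positivity)]
      have h5 : Real.sqrt (2 * β) * (5 * (M + 1)) < 1 := by
        have := mul_lt_mul_of_pos_right hstrict (by positivity : (0:ℝ) < 5 * (M + 1))
        rwa [inv_mul_cancel₀ (by positivity)] at this
      nlinarith [Real.sqrt_nonneg (2 * β)]
    · intro v hv
      have hv1 : β < v := hv.1
      have hv2 : v < 2 * β := hv.2
      have hvpos : 0 < v := lt_trans hβ0 hv1
      have hsv : 0 < Real.sqrt v := Real.sqrt_pos.2 hvpos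
      have hsvle : Real.sqrt v ≤ Real.sqrt (2 * β) :=
        Real.sqrt_le_sqrt (by linarith)
      have hbv : 2 * β < β + v := by linarith
      have hsq : (β + v) ^ 2 ≤ 9 * β ^ 2 := by nlinarith
      have hε2 : ε ^ 2 ≤ β ^ 2 := by nlinarith
      rw [hhdef]
      simp only
      rw [div_le_div_iff₀ (by positivity) (by positivity)]
      have hden : Real.sqrt v * ((β + v) ^ 2 + ε ^ 2)
          ≤ Real.sqrt (2 * β) * (10 * β ^ 2) := by
        have h1 : (β + v) ^ 2 + ε ^ 2 ≤ 10 * β ^ 2 := by linarith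
        exact mul_le_mul hsvle h1 (by positivity) (Real.sqrt_nonneg _)
      have hnum : 2 * β * (5 * β * Real.sqrt (2 * β))
          ≤ (β + v) * (5 * β * Real.sqrt (2 * β)) :=
        mul_le_mul_of_nonneg_right (le_of_lt hbv) (by positivity)
      nlinarith [Real.sqrt_nonneg (2 * β)]
  · -- case B : -ε < β < ε, use the interval (0, ε)
    apply key_im
    have hsub : Ioo (0 : ℝ) ε ⊆ Ioo (0 : ℝ) 1 := by
      intro v hv
      exact ⟨hv.1, by linarith [hv.2]⟩
    have hlow := stmt10_int_lower (φ := g) (a := 0) (b := ε)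
      (k := 1 / (5 * ε * Real.sqrt ε)) hε0 hsub hgint hgpos ?_
    · have hsε : 0 < Real.sqrt ε := Real.sqrt_pos.2 hε0
      have heq : 1 / (5 * ε * Real.sqrt ε) * (ε - 0) = 1 / (5 * Real.sqrt ε) := by
        field_simp
        ring
      rw [heq] at hlow
      refine lt_of_lt_of_le ?_ hlow
      have hstrict : Real.sqrt ε < (10 * (M + 1))⁻¹ := by
        rw [← hsqc]
        exact Real.sqrt_lt_sqrt hε0.le hεc
      rw [lt_div_iff₀ (by positivity)]
      have h5 : Real.sqrt ε * (10 * (M + 1)) < 1 := by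
        have := mul_lt_mul_of_pos_right hstrict (by positivity : (0:ℝ) < 10 * (M + 1))
        rwa [inv_mul_cancel₀ (by positivity)] at this
      nlinarith [Real.sqrt_nonneg ε]
    · intro v hv
      have hv1 : 0 < v := hv.1
      have hv2 : v < ε := hv.2
      have hsv : 0 < Real.sqrt v := Real.sqrt_pos.2 hv1
      have hsvle : Real.sqrt v ≤ Real.sqrt ε := Real.sqrt_le_sqrt hv2.le
      have hsq : (β + v) ^ 2 ≤ 4 * ε ^ 2 := by nlinarith
      rw [hgdef]
      simp only
      rw [div_le_div_iff₀ (by positivity) (by positivity)]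
      have hden : Real.sqrt v * ((β + v) ^ 2 + ε ^ 2)
          ≤ Real.sqrt ε * (5 * ε ^ 2) := by
        have h1 : (β + v) ^ 2 + ε ^ 2 ≤ 5 * ε ^ 2 := by linarith
        exact mul_le_mul hsvle h1 (by positivity) (Real.sqrt_nonneg _)
      nlinarith [Real.sqrt_nonneg ε]
end
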